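/- Let Ψ = (ψ_k)_{k∈ℕ} be a sequence with ψ_k ∈ (−π/2, π/2), set F_n := i·tan(ψ_{|n|}) for n ∈ ℤ, and for d ≥ 1 let (a,b) be the SU(2) nonlinear Fourier series of the truncated sequence (F_n · 1_{−d ≤ n ≤ d}). Then for every x ∈ [0,1], with θ ∈ [0, π/2] the unique number with cos θ = x and z := e^(2iθ): i · Im(u_d(Ψ,x)) = b(z). In particular b(z) is purely imaginary for z on the unit circle. -/

import Mathlib

open MeasureTheory Filter

noncomputable section

/-- The Pauli matrix `Z`. -/
def Zmat : Matrix (Fin 2) (Fin 2) ℂ := !![1, 0; 0, -1]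

/-- The matrix `W(x) = [[x, i√(1-x²)],[i√(1-x²), x]]`. -/
def Wmat (x : ℝ) : Matrix (Fin 2) (Fin 2) ℂ :=
  !![(x : ℂ), Complex.I * Real.sqrt (1 - x ^ 2); Complex.I * Real.sqrt (1 - x ^ 2), (x : ℂ)]

/-- The QSP recursion: `U_0 = e^{iψ₀Z}` and
`U_d = e^{iψ_d Z} W(x) U_{d-1} W(x) e^{iψ_d Z}`. -/
def Umat (ψ : ℕ → ℝ) (x : ℝ) : ℕ → Matrix (Fin 2) (Fin 2) ℂ
  | 0 => NormedSpace.exp ((Complex.I * (ψ 0 : ℂ)) • Zmat)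
  | d + 1 =>
      NormedSpace.exp ((Complex.I * (ψ (d + 1) : ℂ)) • Zmat) * Wmat x * Umat ψ x d *
        Wmat x * NormedSpace.exp ((Complex.I * (ψ (d + 1) : ℂ)) • Zmat)

/-- `u_d(Ψ,x)`: the upper left entry of `U_d(Ψ,x)`. -/
def uQSP (ψ : ℕ → ℝ) (x : ℝ) (d : ℕ) : ℂ := Umat ψ x d 0 0

/-- The Hilbert space norm `‖g‖ = ((2/π) ∫₀¹ |g(x)|² dx/√(1-x²))^{1/2}`. -/
def qspNorm (g : ℝ → ℝ) : ℝ :=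
  Real.sqrt ((2 / Real.pi) * ∫ x in (0:ℝ)..1, g x ^ 2 / Real.sqrt (1 - x ^ 2))

/-- The phase sequence `ψ` represents the signal `f`: all phases lie in `(-π/2,π/2)`,
the Plancherel identity `∑_{k∈ℤ} log(1+tan²ψ_{|k|}) = -(2/π)∫₀¹ log(1-f(x)²) dx/√(1-x²)`
holds, and `Im u_d(Ψ,·) → f` in the Hilbert space norm as `d → ∞`. -/
def QSPRepresents (f : ℝ → ℝ) (ψ : ℕ → ℝ) : Prop :=
  (∀ k, ψ k ∈ Set.Ioo (-(Real.pi / 2)) (Real.pi / 2)) ∧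
  Summable (fun k : ℕ => Real.log (1 + Real.tan (ψ (k + 1)) ^ 2)) ∧
  Real.log (1 + Real.tan (ψ 0) ^ 2) +
      2 * ∑' k : ℕ, Real.log (1 + Real.tan (ψ (k + 1)) ^ 2) =
    -(2 / Real.pi) * ∫ x in (0:ℝ)..1, Real.log (1 - f x ^ 2) / Real.sqrt (1 - x ^ 2) ∧
  Tendsto (fun d : ℕ => qspNorm (fun x => (uQSP ψ x d).im - f x)) atTop (nhds 0)

/-- The SU(2) NLFT factor `(1+|F n|²)^{-1/2} · [[1, F n zⁿ],[−conj(F n) z⁻ⁿ, 1]]`. -/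
def nlftFactor (F : ℤ → ℂ) (n : ℤ) (z : ℂ) : Matrix (Fin 2) (Fin 2) ℂ :=
  (((Real.sqrt (1 + ‖F n‖ ^ 2))⁻¹ : ℝ) : ℂ) •
    !![1, F n * z ^ n; -(starRingEnd ℂ (F n)) * z ^ (-n), 1]

/-- Ordered product of the NLFT factors for `-K ≤ n ≤ K`. -/
def nlftPartial (F : ℤ → ℂ) (K : ℕ) (z : ℂ) : Matrix (Fin 2) (Fin 2) ℂ :=
  (((List.range (2 * K + 1)).map (fun j => nlftFactor F ((j : ℤ) - (K : ℤ)) z)).prod)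

open Classical in
/-- A bound for the support of a finitely supported sequence. -/
def suppBound (F : ℤ → ℂ) : ℕ :=
  if h : (Function.support F).Finite then h.toFinset.sup (fun n => n.natAbs) else 0

/-- The SU(2) nonlinear Fourier series of a finitely supported sequence `F : ℤ → ℂ`,
evaluated at `z`: the ordered product over increasing `n` of the factors
`(1+|F n|²)^{-1/2} · [[1, F n zⁿ],[−conj(F n) z⁻ⁿ, 1]]`. -/
def nlft (F : ℤ → ℂ) (z : ℂ) : Matrix (Fin 2) (Fin 2) ℂ := nlftPartial F (suppBound F) z

/-- First entry `a(z)` of the nonlinear Fourier series. -/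
def nlftA (F : ℤ → ℂ) (z : ℂ) : ℂ := nlft F z 0 0

/-- Second entry `b(z)` of the nonlinear Fourier series. -/
def nlftB (F : ℤ → ℂ) (z : ℂ) : ℂ := nlft F z 0 1

/-! ### Auxiliary lemmas -/

lemma mat2_ext {a b c d a' b' c' d' : ℂ} (h1 : a = a') (h2 : b = b') (h3 : c = c')
    (h4 : d = d') : !![a,b;c,d] = !![a',b';c',d'] := by rw [h1,h2,h3,h4]

lemma stepU (x y c s u ub v : ℂ) (hx2 : x^2 + y^2 = 1) (hcs : c^2 + s^2 = 1) :
    !![c + s*Complex.I, 0; 0, c - s*Complex.I] * !![x, Complex.I*y; Complex.I*y, x] *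
      !![u, v; v, ub] * !![x, Complex.I*y; Complex.I*y, x] *
      !![c + s*Complex.I, 0; 0, c - s*Complex.I]
    = !![(c + s*Complex.I)^2 * (x^2*u + 2*Complex.I*x*y*v - y^2*ub),
         Complex.I*x*y*(u+ub) + (x^2-y^2)*v;
         Complex.I*x*y*(u+ub) + (x^2-y^2)*v,
         (c - s*Complex.I)^2 * (x^2*ub + 2*Complex.I*x*y*v - y^2*u)] := by
  have hI : Complex.I^2 = -1 := Complex.I_sq
  rw [Matrix.mul_fin_two, Matrix.mul_fin_two, Matrix.mul_fin_two, Matrix.mul_fin_two]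
  refine mat2_ext ?_ ?_ ?_ ?_
  · linear_combination ((1*Complex.I^2*y^2*s^2*ub) + (2*Complex.I*y^2*c*s*ub) + (1*y^2*c^2*ub)) * hI
  · linear_combination ((-1*Complex.I^2*y^2*s^2*v) + (-1*Complex.I*x*y*s^2*u) + (-1*Complex.I*x*y*s^2*ub) + (-1*x^2*s^2*v) + (1*y^2*c^2*v) + (1*y^2*s^2*v)) * hI + ((1*c^2*v) + (1*s^2*v) + (-1*v)) * hx2 + ((1*Complex.I*x*y*u) + (1*Complex.I*x*y*ub) + (-2*y^2*v) + (1*v)) * hcs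
  · linear_combination ((-1*Complex.I^2*y^2*s^2*v) + (-1*Complex.I*x*y*s^2*u) + (-1*Complex.I*x*y*s^2*ub) + (-1*x^2*s^2*v) + (1*y^2*c^2*v) + (1*y^2*s^2*v)) * hI + ((1*c^2*v) + (1*s^2*v) + (-1*v)) * hx2 + ((1*Complex.I*x*y*u) + (1*Complex.I*x*y*ub) + (-2*y^2*v) + (1*v)) * hcs
  · linear_combination ((1*Complex.I^2*y^2*s^2*u) + (-2*Complex.I*y^2*c*s*u) + (1*y^2*c^2*u)) * hI

lemma stepN (x y c s u ub v T : ℂ) (hx2 : x^2 + y^2 = 1) (hcs : c^2 + s^2 = 1)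
    (hTP : T * T⁻¹ = 1) :
    !![c, Complex.I*s*(T⁻¹*(x - Complex.I*y)^2); Complex.I*s*(T*(x + Complex.I*y)^2), c] *
      !![T⁻¹*((u+ub)/2 + v), (u-ub)/2; (u-ub)/2, T*((u+ub)/2 - v)] *
      !![c, Complex.I*s*(T*(x + Complex.I*y)^2); Complex.I*s*(T⁻¹*(x - Complex.I*y)^2), c]
    = !![(x - Complex.I*y)^2*T⁻¹*
          ((((c + s*Complex.I)^2 * (x^2*u + 2*Complex.I*x*y*v - y^2*ub))
            + ((c - s*Complex.I)^2 * (x^2*ub + 2*Complex.I*x*y*v - y^2*u)))/2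
            + (Complex.I*x*y*(u+ub) + (x^2-y^2)*v)),
         (((c + s*Complex.I)^2 * (x^2*u + 2*Complex.I*x*y*v - y^2*ub))
            - ((c - s*Complex.I)^2 * (x^2*ub + 2*Complex.I*x*y*v - y^2*u)))/2;
         (((c + s*Complex.I)^2 * (x^2*u + 2*Complex.I*x*y*v - y^2*ub))
            - ((c - s*Complex.I)^2 * (x^2*ub + 2*Complex.I*x*y*v - y^2*u)))/2,
         (x + Complex.I*y)^2*T*
          ((((c + s*Complex.I)^2 * (x^2*u + 2*Complex.I*x*y*v - y^2*ub))
            + ((c - s*Complex.I)^2 * (x^2*ub + 2*Complex.I*x*y*v - y^2*u)))/2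
            - (Complex.I*x*y*(u+ub) + (x^2-y^2)*v))] := by
  have hI : Complex.I^2 = -1 := Complex.I_sq
  rw [Matrix.mul_fin_two, Matrix.mul_fin_two]
  refine mat2_ext ?_ ?_ ?_ ?_
  · linear_combination (((1/2 : ℂ)*Complex.I^4*y^4*s^2*u*T*T⁻¹^2) + ((1/2 : ℂ)*Complex.I^4*y^4*s^2*ub*T*T⁻¹^2) + (-1*Complex.I^4*y^4*s^2*v*T*T⁻¹^2) + (-2*Complex.I^3*x*y^3*s^2*u*T*T⁻¹^2) + (-2*Complex.I^3*x*y^3*s^2*ub*T*T⁻¹^2) + (4*Complex.I^3*x*y^3*s^2*v*T*T⁻¹^2) + (3*Complex.I^2*x^2*y^2*s^2*u*T*T⁻¹^2) + (3*Complex.I^2*x^2*y^2*s^2*ub*T*T⁻¹^2) + (-6*Complex.I^2*x^2*y^2*s^2*v*T*T⁻¹^2) + ((-1/2 : ℂ)*Complex.I^2*y^4*s^2*u*T*T⁻¹^2) + ((-1/2 : ℂ)*Complex.I^2*y^4*s^2*ub*T*T⁻¹^2) + (1*Complex.I^2*y^4*s^2*v*T*T⁻¹^2) + (-2*Complex.I^3*x*y^3*s^2*v*T⁻¹)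 + (-2*Complex.I*x^3*y*s^2*u*T*T⁻¹^2) + (-2*Complex.I*x^3*y*s^2*ub*T*T⁻¹^2) + (4*Complex.I*x^3*y*s^2*v*T*T⁻¹^2) + (2*Complex.I*x*y^3*s^2*u*T*T⁻¹^2) + (2*Complex.I*x*y^3*s^2*ub*T*T⁻¹^2) + (-4*Complex.I*x*y^3*s^2*v*T*T⁻¹^2) + ((-1/2 : ℂ)*Complex.I^2*x^2*y^2*s^2*u*T⁻¹) + ((-1/2 : ℂ)*Complex.I^2*x^2*y^2*s^2*ub*T⁻¹) + (4*Complex.I^2*x^2*y^2*s^2*v*T⁻¹) + ((1/2 : ℂ)*Complex.I^2*y^4*s^2*u*T⁻¹) + ((1/2 : ℂ)*Complex.I^2*y^4*s^2*ub*T⁻¹) + ((1/2 : ℂ)*x^4*s^2*u*T*T⁻¹^2) + ((1/2 : ℂ)*x^4*s^2*ub*T*T⁻¹^2) + (-1*x^4*s^2*v*T*T⁻¹^2) + (-3*x^2*y^2*s^2*u*T*T⁻¹^2) + (-3*x^2*y^2*s^2*ub*T*T⁻¹^2) + (6*x^2*y^2*s^2*v*T*T⁻¹^2) + ((1/2 :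 ℂ)*y^4*s^2*u*T*T⁻¹^2) + ((1/2 : ℂ)*y^4*s^2*ub*T*T⁻¹^2) + (-1*y^4*s^2*v*T*T⁻¹^2) + (1*Complex.I*x^3*y*s^2*u*T⁻¹) + (1*Complex.I*x^3*y*s^2*ub*T⁻¹) + (-2*Complex.I*x^3*y*s^2*v*T⁻¹) + (-1*Complex.I*x^2*y^2*c*s*u*T⁻¹) + (1*Complex.I*x^2*y^2*c*s*ub*T⁻¹) + (-2*Complex.I*x*y^3*c^2*v*T⁻¹) + (-1*Complex.I*x*y^3*s^2*u*T⁻¹) + (-1*Complex.I*x*y^3*s^2*ub*T⁻¹) + (2*Complex.I*x*y^3*s^2*v*T⁻¹) + (-1*Complex.I*y^4*c*s*u*T⁻¹) + (1*Complex.I*y^4*c*s*ub*T⁻¹) + ((-1/2 : ℂ)*x^4*s^2*u*T⁻¹) + ((-1/2 : ℂ)*x^4*s^2*ub*T⁻¹) + (2*x^3*y*c*s*u*T⁻¹) + (-2*x^3*y*c*s*ub*T⁻¹) + ((-1/2 : ℂ)*x^2*y^2*c^2*u*T⁻¹) + ((-1/2 : ℂ)*x^2*y^2*c^2*ub*T⁻¹)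 + (4*x^2*y^2*c^2*v*T⁻¹) + (1*x^2*y^2*s^2*u*T⁻¹) + (1*x^2*y^2*s^2*ub*T⁻¹) + (-4*x^2*y^2*s^2*v*T⁻¹) + (2*x*y^3*c*s*u*T⁻¹) + (-2*x*y^3*c*s*ub*T⁻¹) + ((1/2 : ℂ)*y^4*c^2*u*T⁻¹) + ((1/2 : ℂ)*y^4*c^2*ub*T⁻¹) + ((-1/2 : ℂ)*y^4*s^2*u*T⁻¹) + ((-1/2 : ℂ)*y^4*s^2*ub*T⁻¹) + (-1*Complex.I*x*y^3*u*T⁻¹) + (-1*Complex.I*x*y^3*ub*T⁻¹) + (1*Complex.I*y^2*c*s*u*T⁻¹) + (-1*Complex.I*y^2*c*s*ub*T⁻¹) + (2*x^2*y^2*u*T⁻¹) + (2*x^2*y^2*ub*T⁻¹) + (-1*x^2*y^2*v*T⁻¹) + (-2*x*y*c*s*u*T⁻¹) + (2*x*y*c*s*ub*T⁻¹) + (1*y^4*v*T⁻¹)) * hI + ((2*Complex.I*x*y*s^2*u*T*T⁻¹^2) + (2*Complex.I*x*y*s^2*ub*T*T⁻¹^2) + (-4*Complex.I*x*y*s^2*v*T*T⁻¹^2)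 + ((-1/2 : ℂ)*x^2*s^2*u*T*T⁻¹^2) + ((-1/2 : ℂ)*x^2*s^2*ub*T*T⁻¹^2) + (1*x^2*s^2*v*T*T⁻¹^2) + ((7/2 : ℂ)*y^2*s^2*u*T*T⁻¹^2) + ((7/2 : ℂ)*y^2*s^2*ub*T*T⁻¹^2) + (-7*y^2*s^2*v*T*T⁻¹^2) + (-1*Complex.I*x^2*c*s*u*T⁻¹) + (1*Complex.I*x^2*c*s*ub*T⁻¹) + (1*Complex.I*x*y*c^2*u*T⁻¹) + (1*Complex.I*x*y*c^2*ub*T⁻¹) + (-2*Complex.I*x*y*c^2*v*T⁻¹) + (-1*Complex.I*x*y*s^2*u*T⁻¹) + (-1*Complex.I*x*y*s^2*ub*T⁻¹) + (2*Complex.I*x*y*s^2*v*T⁻¹) + (1*Complex.I*y^2*c*s*u*T⁻¹) + (-1*Complex.I*y^2*c*s*ub*T⁻¹) + ((-1/2 : ℂ)*x^2*c^2*u*T⁻¹) + ((-1/2 : ℂ)*x^2*c^2*ub*T⁻¹) + ((1/2 : ℂ)*x^2*s^2*u*T⁻¹) + ((1/2 : ℂ)*x^2*s^2*ub*T⁻¹)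 + (-2*x*y*c*s*u*T⁻¹) + (2*x*y*c*s*ub*T⁻¹) + ((3/2 : ℂ)*y^2*c^2*u*T⁻¹) + ((3/2 : ℂ)*y^2*c^2*ub*T⁻¹) + (-4*y^2*c^2*v*T⁻¹) + ((-3/2 : ℂ)*y^2*s^2*u*T⁻¹) + ((-3/2 : ℂ)*y^2*s^2*ub*T⁻¹) + (4*y^2*s^2*v*T⁻¹) + ((-1/2 : ℂ)*s^2*u*T*T⁻¹^2) + ((-1/2 : ℂ)*s^2*ub*T*T⁻¹^2) + (1*s^2*v*T*T⁻¹^2) + (-1*Complex.I*x*y*u*T⁻¹) + (-1*Complex.I*x*y*ub*T⁻¹) + (2*Complex.I*x*y*v*T⁻¹) + (-1*x^2*v*T⁻¹) + (-2*y^2*u*T⁻¹) + (-2*y^2*ub*T⁻¹) + (3*y^2*v*T⁻¹) + ((-1/2 : ℂ)*c^2*u*T⁻¹) + ((-1/2 : ℂ)*c^2*ub*T⁻¹) + ((1/2 : ℂ)*s^2*u*T⁻¹) + ((1/2 : ℂ)*s^2*ub*T⁻¹) + (-1*v*T⁻¹)) * hx2 + ((-2*Complex.I*x*y^3*u*T⁻¹)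 + (-2*Complex.I*x*y^3*ub*T⁻¹) + (4*Complex.I*x*y^3*v*T⁻¹) + (-2*y^4*u*T⁻¹) + (-2*y^4*ub*T⁻¹) + (4*y^4*v*T⁻¹) + (1*Complex.I*x*y*u*T⁻¹) + (1*Complex.I*x*y*ub*T⁻¹) + (-2*Complex.I*x*y*v*T⁻¹) + (2*y^2*u*T⁻¹) + (2*y^2*ub*T⁻¹) + (-4*y^2*v*T⁻¹) + (1*v*T⁻¹)) * hcs + ((-4*Complex.I*x*y^3*s^2*u*T⁻¹) + (-4*Complex.I*x*y^3*s^2*ub*T⁻¹) + (8*Complex.I*x*y^3*s^2*v*T⁻¹) + (-4*y^4*s^2*u*T⁻¹) + (-4*y^4*s^2*ub*T⁻¹) + (8*y^4*s^2*v*T⁻¹) + (2*Complex.I*x*y*s^2*u*T⁻¹) + (2*Complex.I*x*y*s^2*ub*T⁻¹) + (-4*Complex.I*x*y*s^2*v*T⁻¹) + (4*y^2*s^2*u*T⁻¹) + (4*y^2*s^2*ub*T⁻¹) + (-8*y^2*s^2*v*T⁻¹) + ((-1/2 : ℂ)*s^2*u*T⁻¹) + ((-1/2 : ℂ)*s^2*ub*T⁻¹)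 + (1*s^2*v*T⁻¹)) * hTP
  · linear_combination (((1/2 : ℂ)*Complex.I^4*y^4*s^2*u*T*T⁻¹) + ((-1/2 : ℂ)*Complex.I^4*y^4*s^2*ub*T*T⁻¹) + (-1*Complex.I^2*x^2*y^2*s^2*u*T*T⁻¹) + (1*Complex.I^2*x^2*y^2*s^2*ub*T*T⁻¹) + ((-1/2 : ℂ)*Complex.I^2*y^4*s^2*u*T*T⁻¹) + ((1/2 : ℂ)*Complex.I^2*y^4*s^2*ub*T*T⁻¹) + ((1/2 : ℂ)*x^4*s^2*u*T*T⁻¹) + ((-1/2 : ℂ)*x^4*s^2*ub*T*T⁻¹) + (1*x^2*y^2*s^2*u*T*T⁻¹) + (-1*x^2*y^2*s^2*ub*T*T⁻¹) + ((1/2 : ℂ)*y^4*s^2*u*T*T⁻¹) + ((-1/2 : ℂ)*y^4*s^2*ub*T*T⁻¹) + (1*Complex.I*y^2*c*s*u*T*T⁻¹) + (1*Complex.I*y^2*c*s*ub*T*T⁻¹) + (4*x*y*c*s*v*T*T⁻¹) + ((-1/2 : ℂ)*x^2*s^2*u) + ((1/2 : ℂ)*x^2*s^2*ub) + (-4*x*y*c*s*v)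 + ((-1/2 : ℂ)*y^2*s^2*u) + ((1/2 : ℂ)*y^2*s^2*ub)) * hI + (((-1/2 : ℂ)*x^2*s^2*u*T*T⁻¹) + ((1/2 : ℂ)*x^2*s^2*ub*T*T⁻¹) + ((-1/2 : ℂ)*y^2*s^2*u*T*T⁻¹) + ((1/2 : ℂ)*y^2*s^2*ub*T*T⁻¹) + (1*Complex.I*c*s*u*T*T⁻¹) + (1*Complex.I*c*s*ub*T*T⁻¹) + ((-1/2 : ℂ)*s^2*u*T*T⁻¹) + ((1/2 : ℂ)*s^2*ub*T*T⁻¹) + (-1*Complex.I*c*s*u) + (-1*Complex.I*c*s*ub) + ((-1/2 : ℂ)*c^2*u) + ((1/2 : ℂ)*c^2*ub) + ((1/2 : ℂ)*s^2*u) + ((-1/2 : ℂ)*s^2*ub)) * hx2 + ((-2*Complex.I*y^2*c*s*u) + (-2*Complex.I*y^2*c*s*ub) + (-4*x*y*c*s*v) + (1*Complex.I*c*s*u) + (1*Complex.I*c*s*ub) + ((-1/2 : ℂ)*s^2*u) + ((1/2 : ℂ)*s^2*ub)) * hTP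
  · linear_combination (((1/2 : ℂ)*Complex.I^4*y^4*s^2*u*T*T⁻¹) + ((-1/2 : ℂ)*Complex.I^4*y^4*s^2*ub*T*T⁻¹) + (-1*Complex.I^2*x^2*y^2*s^2*u*T*T⁻¹) + (1*Complex.I^2*x^2*y^2*s^2*ub*T*T⁻¹) + ((-1/2 : ℂ)*Complex.I^2*y^4*s^2*u*T*T⁻¹) + ((1/2 : ℂ)*Complex.I^2*y^4*s^2*ub*T*T⁻¹) + ((1/2 : ℂ)*x^4*s^2*u*T*T⁻¹) + ((-1/2 : ℂ)*x^4*s^2*ub*T*T⁻¹) + (1*x^2*y^2*s^2*u*T*T⁻¹) + (-1*x^2*y^2*s^2*ub*T*T⁻¹) + ((1/2 : ℂ)*y^4*s^2*u*T*T⁻¹) + ((-1/2 : ℂ)*y^4*s^2*ub*T*T⁻¹) + (1*Complex.I*y^2*c*s*u*T*T⁻¹) + (1*Complex.I*y^2*c*s*ub*T*T⁻¹) + (4*x*y*c*s*v*T*T⁻¹) + ((-1/2 : ℂ)*x^2*s^2*u) + ((1/2 : ℂ)*x^2*s^2*ub) + (-4*x*y*c*s*v) + ((-1/2 : ℂ)*y^2*s^2*u)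 + ((1/2 : ℂ)*y^2*s^2*ub)) * hI + (((-1/2 : ℂ)*x^2*s^2*u*T*T⁻¹) + ((1/2 : ℂ)*x^2*s^2*ub*T*T⁻¹) + ((-1/2 : ℂ)*y^2*s^2*u*T*T⁻¹) + ((1/2 : ℂ)*y^2*s^2*ub*T*T⁻¹) + (1*Complex.I*c*s*u*T*T⁻¹) + (1*Complex.I*c*s*ub*T*T⁻¹) + ((-1/2 : ℂ)*s^2*u*T*T⁻¹) + ((1/2 : ℂ)*s^2*ub*T*T⁻¹) + (-1*Complex.I*c*s*u) + (-1*Complex.I*c*s*ub) + ((-1/2 : ℂ)*c^2*u) + ((1/2 : ℂ)*c^2*ub) + ((1/2 : ℂ)*s^2*u) + ((-1/2 : ℂ)*s^2*ub)) * hx2 + ((-2*Complex.I*y^2*c*s*u) + (-2*Complex.I*y^2*c*s*ub) + (-4*x*y*c*s*v) + (1*Complex.I*c*s*u) + (1*Complex.I*c*s*ub) + ((-1/2 : ℂ)*s^2*u) + ((1/2 : ℂ)*s^2*ub)) * hTP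
  · linear_combination (((1/2 : ℂ)*Complex.I^4*y^4*s^2*u*T^2*T⁻¹) + ((1/2 : ℂ)*Complex.I^4*y^4*s^2*ub*T^2*T⁻¹) + (1*Complex.I^4*y^4*s^2*v*T^2*T⁻¹) + (2*Complex.I^3*x*y^3*s^2*u*T^2*T⁻¹) + (2*Complex.I^3*x*y^3*s^2*ub*T^2*T⁻¹) + (4*Complex.I^3*x*y^3*s^2*v*T^2*T⁻¹) + (3*Complex.I^2*x^2*y^2*s^2*u*T^2*T⁻¹) + (3*Complex.I^2*x^2*y^2*s^2*ub*T^2*T⁻¹) + (6*Complex.I^2*x^2*y^2*s^2*v*T^2*T⁻¹) + ((-1/2 : ℂ)*Complex.I^2*y^4*s^2*u*T^2*T⁻¹) + ((-1/2 : ℂ)*Complex.I^2*y^4*s^2*ub*T^2*T⁻¹) + (-1*Complex.I^2*y^4*s^2*v*T^2*T⁻¹) + (-2*Complex.I^3*x*y^3*s^2*v*T) + (2*Complex.I*x^3*y*s^2*u*T^2*T⁻¹) + (2*Complex.I*x^3*y*s^2*ub*T^2*T⁻¹) + (4*Complex.I*x^3*y*s^2*v*T^2*T⁻¹) + (-2*Complex.I*x*y^3*s^2*u*T^2*T⁻¹)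 + (-2*Complex.I*x*y^3*s^2*ub*T^2*T⁻¹) + (-4*Complex.I*x*y^3*s^2*v*T^2*T⁻¹) + ((-1/2 : ℂ)*Complex.I^2*x^2*y^2*s^2*u*T) + ((-1/2 : ℂ)*Complex.I^2*x^2*y^2*s^2*ub*T) + (-4*Complex.I^2*x^2*y^2*s^2*v*T) + ((1/2 : ℂ)*Complex.I^2*y^4*s^2*u*T) + ((1/2 : ℂ)*Complex.I^2*y^4*s^2*ub*T) + ((1/2 : ℂ)*x^4*s^2*u*T^2*T⁻¹) + ((1/2 : ℂ)*x^4*s^2*ub*T^2*T⁻¹) + (1*x^4*s^2*v*T^2*T⁻¹) + (-3*x^2*y^2*s^2*u*T^2*T⁻¹) + (-3*x^2*y^2*s^2*ub*T^2*T⁻¹) + (-6*x^2*y^2*s^2*v*T^2*T⁻¹) + ((1/2 : ℂ)*y^4*s^2*u*T^2*T⁻¹) + ((1/2 : ℂ)*y^4*s^2*ub*T^2*T⁻¹) + (1*y^4*s^2*v*T^2*T⁻¹) + (-1*Complex.I*x^3*y*s^2*u*T) + (-1*Complex.I*x^3*y*s^2*ub*T) + (-2*Complex.I*x^3*y*s^2*v*T)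 + (-1*Complex.I*x^2*y^2*c*s*u*T) + (1*Complex.I*x^2*y^2*c*s*ub*T) + (-2*Complex.I*x*y^3*c^2*v*T) + (1*Complex.I*x*y^3*s^2*u*T) + (1*Complex.I*x*y^3*s^2*ub*T) + (2*Complex.I*x*y^3*s^2*v*T) + (-1*Complex.I*y^4*c*s*u*T) + (1*Complex.I*y^4*c*s*ub*T) + ((-1/2 : ℂ)*x^4*s^2*u*T) + ((-1/2 : ℂ)*x^4*s^2*ub*T) + (-2*x^3*y*c*s*u*T) + (2*x^3*y*c*s*ub*T) + ((-1/2 : ℂ)*x^2*y^2*c^2*u*T) + ((-1/2 : ℂ)*x^2*y^2*c^2*ub*T) + (-4*x^2*y^2*c^2*v*T) + (1*x^2*y^2*s^2*u*T) + (1*x^2*y^2*s^2*ub*T) + (4*x^2*y^2*s^2*v*T) + (-2*x*y^3*c*s*u*T) + (2*x*y^3*c*s*ub*T) + ((1/2 : ℂ)*y^4*c^2*u*T) + ((1/2 : ℂ)*y^4*c^2*ub*T) + ((-1/2 : ℂ)*y^4*s^2*u*T) + ((-1/2 : ℂ)*y^4*s^2*ub*T) + (1*Complex.I*x*y^3*u*T)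 + (1*Complex.I*x*y^3*ub*T) + (1*Complex.I*y^2*c*s*u*T) + (-1*Complex.I*y^2*c*s*ub*T) + (2*x^2*y^2*u*T) + (2*x^2*y^2*ub*T) + (1*x^2*y^2*v*T) + (2*x*y*c*s*u*T) + (-2*x*y*c*s*ub*T) + (-1*y^4*v*T)) * hI + ((-2*Complex.I*x*y*s^2*u*T^2*T⁻¹) + (-2*Complex.I*x*y*s^2*ub*T^2*T⁻¹) + (-4*Complex.I*x*y*s^2*v*T^2*T⁻¹) + ((-1/2 : ℂ)*x^2*s^2*u*T^2*T⁻¹) + ((-1/2 : ℂ)*x^2*s^2*ub*T^2*T⁻¹) + (-1*x^2*s^2*v*T^2*T⁻¹) + ((7/2 : ℂ)*y^2*s^2*u*T^2*T⁻¹) + ((7/2 : ℂ)*y^2*s^2*ub*T^2*T⁻¹) + (7*y^2*s^2*v*T^2*T⁻¹) + (-1*Complex.I*x^2*c*s*u*T) + (1*Complex.I*x^2*c*s*ub*T) + (-1*Complex.I*x*y*c^2*u*T) + (-1*Complex.I*x*y*c^2*ub*T) + (-2*Complex.I*x*y*c^2*v*T) + (1*Complex.I*x*y*s^2*u*T) +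 (1*Complex.I*x*y*s^2*ub*T) + (2*Complex.I*x*y*s^2*v*T) + (1*Complex.I*y^2*c*s*u*T) + (-1*Complex.I*y^2*c*s*ub*T) + ((-1/2 : ℂ)*x^2*c^2*u*T) + ((-1/2 : ℂ)*x^2*c^2*ub*T) + ((1/2 : ℂ)*x^2*s^2*u*T) + ((1/2 : ℂ)*x^2*s^2*ub*T) + (2*x*y*c*s*u*T) + (-2*x*y*c*s*ub*T) + ((3/2 : ℂ)*y^2*c^2*u*T) + ((3/2 : ℂ)*y^2*c^2*ub*T) + (4*y^2*c^2*v*T) + ((-3/2 : ℂ)*y^2*s^2*u*T) + ((-3/2 : ℂ)*y^2*s^2*ub*T) + (-4*y^2*s^2*v*T) + ((-1/2 : ℂ)*s^2*u*T^2*T⁻¹) + ((-1/2 : ℂ)*s^2*ub*T^2*T⁻¹) + (-1*s^2*v*T^2*T⁻¹) + (1*Complex.I*x*y*u*T) + (1*Complex.I*x*y*ub*T) + (2*Complex.I*x*y*v*T) + (1*x^2*v*T) + (-2*y^2*u*T) + (-2*y^2*ub*T) + (-3*y^2*v*T) + ((-1/2 : ℂ)*c^2*u*T) + ((-1/2 :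 ℂ)*c^2*ub*T) + ((1/2 : ℂ)*s^2*u*T) + ((1/2 : ℂ)*s^2*ub*T) + (1*v*T)) * hx2 + ((2*Complex.I*x*y^3*u*T) + (2*Complex.I*x*y^3*ub*T) + (4*Complex.I*x*y^3*v*T) + (-2*y^4*u*T) + (-2*y^4*ub*T) + (-4*y^4*v*T) + (-1*Complex.I*x*y*u*T) + (-1*Complex.I*x*y*ub*T) + (-2*Complex.I*x*y*v*T) + (2*y^2*u*T) + (2*y^2*ub*T) + (4*y^2*v*T) + (-1*v*T)) * hcs + ((4*Complex.I*x*y^3*s^2*u*T) + (4*Complex.I*x*y^3*s^2*ub*T) + (8*Complex.I*x*y^3*s^2*v*T) + (-4*y^4*s^2*u*T) + (-4*y^4*s^2*ub*T) + (-8*y^4*s^2*v*T) + (-2*Complex.I*x*y*s^2*u*T) + (-2*Complex.I*x*y*s^2*ub*T) + (-4*Complex.I*x*y*s^2*v*T) + (4*y^2*s^2*u*T) + (4*y^2*s^2*ub*T) + (8*y^2*s^2*v*T) + ((-1/2 : ℂ)*s^2*u*T) + ((-1/2 : ℂ)*s^2*ub*T) + (-1*s^2*v*T)) * hTP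

lemma expZ (t : ℝ) : NormedSpace.exp ((Complex.I * t) • Zmat) =
    !![Complex.exp (Complex.I*t), 0; 0, Complex.exp (-(Complex.I*t))] := by
  have h1 : Zmat = Matrix.diagonal ![1, -1] := by
    ext i j; fin_cases i <;> fin_cases j <;> simp [Zmat]
  rw [h1, ← Matrix.diagonal_smul, Matrix.exp_diagonal]
  ext i j; fin_cases i <;> fin_cases j <;>
    simp [Matrix.diagonal, ← Complex.exp_eq_exp_ℂ]

lemma smul2 (r a b c d : ℂ) : r • !![a,b;c,d] = !![r*a,r*b;r*c,r*d] := by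
  ext i j; fin_cases i <;> fin_cases j <;> simp

lemma map_coe_list {α : Type*} (g : ℤ → α) (l : List ℕ) :
    List.map g (l >>= fun a => pure ((a:ℤ))) = List.map (fun j : ℕ => g j) l := by
  induction l with
  | nil => rfl
  | cons a t ih => simpa using ih

lemma nlftPartial_eq (F : ℤ → ℂ) (K : ℕ) (z : ℂ) :
    nlftPartial F K z
      = ((List.range (2*K+1)).map (fun j : ℕ => nlftFactor F ((j:ℤ) - (K:ℤ)) z)).prod := by
  unfold nlftPartial; rw [map_coe_list]

lemma peel (F : ℤ → ℂ) (K : ℕ) (z : ℂ) :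
    nlftPartial F (K+1) z =
    nlftFactor F (-(K+1 : ℕ) : ℤ) z * nlftPartial F K z * nlftFactor F ((K+1 : ℕ) : ℤ) z := by
  rw [nlftPartial_eq, nlftPartial_eq]
  have h1 : 2 * (K+1) + 1 = (2*K+2) + 1 := by ring
  rw [h1, List.range_succ, List.range_succ_eq_map]
  simp only [List.map_cons, List.map_append, List.map_map, List.prod_cons, List.prod_append,
    List.map_nil, List.prod_nil, mul_one]
  have h2 : (fun j : ℕ => nlftFactor F ((j : ℤ) - ((K+1 : ℕ) : ℤ)) z) ∘ Nat.succ
      = fun j : ℕ => nlftFactor F ((j : ℤ) - (K : ℤ)) z := by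
    funext j; simp only [Function.comp]; congr 1; push_cast; ring
  have e1 : ((0:ℕ):ℤ) - ((K+1:ℕ):ℤ) = (-((K+1:ℕ):ℤ)) := by push_cast; ring
  have e2 : (((2*K+2:ℕ)):ℤ) - ((K+1:ℕ):ℤ) = (((K+1:ℕ):ℤ)) := by push_cast; ring
  rw [h2, e1, e2]

lemma factor_congr (F G : ℤ → ℂ) (n : ℤ) (z : ℂ) (h : F n = G n) :
    nlftFactor F n z = nlftFactor G n z := by unfold nlftFactor; rw [h]

lemma factor_one (F : ℤ → ℂ) (n : ℤ) (z : ℂ) (h : F n = 0) : nlftFactor F n z = 1 := by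
  unfold nlftFactor
  rw [h]
  norm_num
  exact (Matrix.one_fin_two (α := ℂ)).symm

lemma factor_eq {F : ℤ → ℂ} {t : ℝ} (hc : 0 < Real.cos t) (m : ℤ) (z : ℂ)
    (hF : F m = Complex.I * Real.tan t) :
    nlftFactor F m z = !![(Real.cos t : ℂ), Complex.I * Real.sin t * z^m;
                          Complex.I * Real.sin t * z^(-m), (Real.cos t : ℂ)] := by
  unfold nlftFactor
  rw [hF]
  have h1 : ‖Complex.I * (Real.tan t : ℂ)‖ ^ 2 = Real.tan t ^ 2 := by
    rw [norm_mul, Complex.norm_I, one_mul, Complex.norm_real, Real.norm_eq_abs, sq_abs]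
  rw [h1, Real.inv_sqrt_one_add_tan_sq hc]
  have h2 : -(starRingEnd ℂ) (Complex.I * (Real.tan t : ℂ)) = Complex.I * Real.tan t := by
    simp only [map_mul, Complex.conj_I, Complex.conj_ofReal]
    ring
  rw [h2, smul2]
  have h3r : Real.cos t * Real.tan t = Real.sin t := by
    rw [Real.tan_eq_sin_div_cos]; field_simp
  have h3 : (Real.cos t : ℂ) * (Real.tan t : ℂ) = Real.sin t := by exact_mod_cast h3r
  refine mat2_ext (by ring) ?_ ?_ (by ring)
  · linear_combination Complex.I * z^m * h3
  · linear_combination Complex.I * z^(-m) * h3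

lemma exp_I_mul (t : ℝ) : Complex.exp (Complex.I * t)
    = (Real.cos t : ℂ) + (Real.sin t : ℂ) * Complex.I := by
  rw [mul_comm, Complex.exp_mul_I, ← Complex.ofReal_cos, ← Complex.ofReal_sin]

lemma exp_neg_I_mul (t : ℝ) : Complex.exp (-(Complex.I * t))
    = (Real.cos t : ℂ) - (Real.sin t : ℂ) * Complex.I := by
  have h : -(Complex.I * (t:ℂ)) = Complex.I * ((-t : ℝ) : ℂ) := by push_cast; ring
  rw [h, exp_I_mul]
  push_cast [Real.cos_neg, Real.sin_neg]
  ring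

lemma exp_two_I_mul (t : ℝ) : Complex.exp (2 * Complex.I * t)
    = ((Real.cos t : ℂ) + (Real.sin t : ℂ) * Complex.I)^2 := by
  rw [show (2 * Complex.I * (t:ℂ)) = Complex.I * t + Complex.I * t by ring, Complex.exp_add,
    exp_I_mul]
  ring

lemma reC (w : ℂ) : ((w.re : ℝ) : ℂ) = (w + (starRingEnd ℂ) w)/2 := by
  rw [Complex.add_conj]; push_cast; ring

lemma imC (w : ℂ) : Complex.I * ((w.im : ℝ) : ℂ) = (w - (starRingEnd ℂ) w)/2 := by
  rw [Complex.sub_conj]; push_cast; ring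

/-- The main induction. -/
lemma main_ind (ψ : ℕ → ℝ) (hψ : ∀ k, 0 < Real.cos (ψ k)) (x y : ℝ)
    (hxy : (x:ℂ)^2 + (y:ℂ)^2 = 1) :
    ∀ d : ℕ, ∃ u v : ℂ, (starRingEnd ℂ) v = -v ∧
      (Wmat x = !![(x:ℂ), Complex.I*(y:ℂ); Complex.I*(y:ℂ), (x:ℂ)] →
        Umat ψ x d = !![u, v; v, (starRingEnd ℂ) u]) ∧
      nlftPartial (fun n : ℤ => Complex.I * Real.tan (ψ n.natAbs)) d (((x:ℂ) + Complex.I*y)^2)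
        = !![((((x:ℂ) + Complex.I*y)^2)^d)⁻¹ * ((u.re:ℂ) + v), Complex.I * (u.im:ℂ);
             Complex.I * (u.im:ℂ), (((x:ℂ) + Complex.I*y)^2)^d * ((u.re:ℂ) - v)] := by
  have hζ1 : ((x:ℂ) + Complex.I*y) * ((x:ℂ) - Complex.I*y) = 1 := by
    linear_combination hxy - (y:ℂ)^2 * Complex.I_sq
  have hζ0 : ((x:ℂ) + Complex.I*y) ≠ 0 := left_ne_zero_of_mul_eq_one hζ1
  have hzinv : (((x:ℂ) + Complex.I*y)^2)⁻¹ = ((x:ℂ) - Complex.I*y)^2 := by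
    rw [inv_eq_of_mul_eq_one_right]; linear_combination
      (((x:ℂ)+Complex.I*y)*((x:ℂ)-Complex.I*y) + 1) * hζ1
  intro d
  induction d with
  | zero =>
    refine ⟨(Real.cos (ψ 0) : ℂ) + (Real.sin (ψ 0) : ℂ) * Complex.I, 0, by simp, ?_, ?_⟩
    · intro _
      show NormedSpace.exp ((Complex.I * ((ψ 0 : ℝ) : ℂ)) • Zmat) = _
      rw [expZ, exp_I_mul, exp_neg_I_mul]
      refine mat2_ext rfl rfl rfl ?_
      simp only [map_add, map_mul, Complex.conj_I, Complex.conj_ofReal]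
      ring
    · rw [nlftPartial_eq]
      have : (2 * 0 + 1) = 1 := rfl
      rw [this, show List.range 1 = [0] from rfl, List.map_singleton, List.prod_singleton]
      have hF0 : (fun n : ℤ => Complex.I * (Real.tan (ψ n.natAbs) : ℂ)) 0
          = Complex.I * Real.tan (ψ ((0:ℤ)).natAbs) := rfl
      rw [show ((0:ℕ):ℤ) - ((0:ℕ):ℤ) = (0:ℤ) by ring,
        factor_eq (hψ 0) 0 _ (by norm_num)]
      refine mat2_ext ?_ ?_ ?_ ?_ <;>
        simp [Complex.add_re, Complex.add_im, Complex.ofReal_re, Complex.ofReal_im,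
          Complex.mul_re, Complex.mul_im, Complex.I_re, Complex.I_im] <;> ring
  | succ d ih =>
    obtain ⟨u, v, hv, hU, hP⟩ := ih
    set c := Real.cos (ψ (d+1)) with hcdef
    set s := Real.sin (ψ (d+1)) with hsdef
    have hcs : (c:ℂ)^2 + (s:ℂ)^2 = 1 := by
      rw [hcdef, hsdef]
      exact_mod_cast Real.cos_sq_add_sin_sq (ψ (d+1))
    set ub := (starRingEnd ℂ) u with hubdef
    refine ⟨Complex.exp (2 * Complex.I * ((ψ (d+1) : ℝ) : ℂ)) *
        ((x:ℂ)^2*u + 2*Complex.I*x*y*v - (y:ℂ)^2*ub),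
      Complex.I*x*y*(u+ub) + ((x:ℂ)^2-(y:ℂ)^2)*v, ?_, ?_, ?_⟩
    · simp only [map_add, map_mul, map_sub, map_pow, Complex.conj_I, Complex.conj_ofReal,
        Complex.conj_conj, hv, hubdef, map_ofNat]
      try ring
    · intro hW
      have hUm : Umat ψ x (d+1) =
          NormedSpace.exp ((Complex.I * ((ψ (d + 1) : ℝ) : ℂ)) • Zmat) * Wmat x * Umat ψ x d *
            Wmat x * NormedSpace.exp ((Complex.I * ((ψ (d + 1) : ℝ) : ℂ)) • Zmat) := rfl
      rw [hUm, expZ, exp_I_mul, exp_neg_I_mul, hW, hU hW, stepU _ _ _ _ _ _ _ hxy hcs]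
      have hconj : (starRingEnd ℂ) (Complex.exp (2 * Complex.I * ((ψ (d+1) : ℝ) : ℂ)) *
          ((x:ℂ)^2*u + 2*Complex.I*x*y*v - (y:ℂ)^2*ub))
          = ((c:ℂ) - (s:ℂ)*Complex.I)^2 * ((x:ℂ)^2*ub + 2*Complex.I*x*y*v - (y:ℂ)^2*u) := by
        rw [exp_two_I_mul]
        simp only [map_mul, map_add, map_sub, map_pow, Complex.conj_I, Complex.conj_ofReal,
          Complex.conj_conj, hv, hubdef, map_ofNat]
        ring
      rw [hconj, exp_two_I_mul]
    · have hpos : 0 < Real.cos (ψ (((((d:ℤ))+1)).natAbs)) := by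
        have : ((((d:ℤ))+1)).natAbs = d + 1 := by omega
        rw [this]; exact hψ (d+1)
      have hA : nlftFactor (fun n : ℤ => Complex.I * Real.tan (ψ n.natAbs))
            (-((d+1 : ℕ) : ℤ)) (((x:ℂ) + Complex.I*y)^2)
          = !![(c:ℂ), Complex.I*(s:ℂ)*(((((x:ℂ) + Complex.I*y)^2)^d)⁻¹*((x:ℂ) - Complex.I*y)^2);
               Complex.I*(s:ℂ)*(((((x:ℂ) + Complex.I*y)^2)^d)*((x:ℂ) + Complex.I*y)^2), (c:ℂ)] := by
        rw [factor_eq (t := ψ (d+1)) (hψ (d+1)) _ _ (by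
          show Complex.I * (Real.tan (ψ ((-((d+1:ℕ):ℤ)).natAbs)) : ℂ) = _
          rw [show ((-((d+1:ℕ):ℤ)).natAbs) = d + 1 from by omega])]
        refine mat2_ext rfl ?_ ?_ rfl
        · rw [zpow_neg, zpow_natCast, pow_succ, mul_inv, hzinv, hsdef]
        · rw [neg_neg, zpow_natCast, pow_succ, hsdef]
      have hB : nlftFactor (fun n : ℤ => Complex.I * Real.tan (ψ n.natAbs))
            (((d+1 : ℕ)) : ℤ) (((x:ℂ) + Complex.I*y)^2)
          = !![(c:ℂ), Complex.I*(s:ℂ)*(((((x:ℂ) + Complex.I*y)^2)^d)*((x:ℂ) + Complex.I*y)^2);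
               Complex.I*(s:ℂ)*(((((x:ℂ) + Complex.I*y)^2)^d)⁻¹*((x:ℂ) - Complex.I*y)^2), (c:ℂ)] := by
        rw [factor_eq (t := ψ (d+1)) (hψ (d+1)) _ _ (by
          show Complex.I * (Real.tan (ψ ((((d+1:ℕ):ℤ)).natAbs)) : ℂ) = _
          rw [show ((((d+1:ℕ):ℤ)).natAbs) = d + 1 from by omega])]
        refine mat2_ext rfl ?_ ?_ rfl
        · rw [zpow_natCast, pow_succ, hsdef]
        · rw [zpow_neg, zpow_natCast, pow_succ, mul_inv, hzinv, hsdef]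
      have hTP : (((x:ℂ) + Complex.I*y)^2)^d * ((((x:ℂ) + Complex.I*y)^2)^d)⁻¹ = 1 :=
        mul_inv_cancel₀ (pow_ne_zero _ (pow_ne_zero _ hζ0))
      have hM : !![((((x:ℂ) + Complex.I*y)^2)^d)⁻¹ * ((u.re:ℂ) + v), Complex.I * (u.im:ℂ);
             Complex.I * (u.im:ℂ), (((x:ℂ) + Complex.I*y)^2)^d * ((u.re:ℂ) - v)]
          = !![((((x:ℂ) + Complex.I*y)^2)^d)⁻¹*((u+ub)/2 + v), (u-ub)/2;
               (u-ub)/2, (((x:ℂ) + Complex.I*y)^2)^d*((u+ub)/2 - v)] := by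
        refine mat2_ext ?_ ?_ ?_ ?_
        · rw [hubdef, reC u]
        · rw [hubdef, imC u]
        · rw [hubdef, imC u]
        · rw [hubdef, reC u]
      rw [peel, hP, hA, hB, hM, stepN _ _ _ _ _ _ _ _ hxy hcs hTP]
      have hre' : ((Complex.exp (2 * Complex.I * ((ψ (d+1) : ℝ) : ℂ)) *
          ((x:ℂ)^2*u + 2*Complex.I*x*y*v - (y:ℂ)^2*ub)).re : ℂ)
          = (((c:ℂ) + (s:ℂ)*Complex.I)^2 * ((x:ℂ)^2*u + 2*Complex.I*x*y*v - (y:ℂ)^2*ub)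
            + ((c:ℂ) - (s:ℂ)*Complex.I)^2 * ((x:ℂ)^2*ub + 2*Complex.I*x*y*v - (y:ℂ)^2*u))/2 := by
        rw [reC, exp_two_I_mul]
        simp only [map_mul, map_add, map_sub, map_pow, Complex.conj_I, Complex.conj_ofReal,
          Complex.conj_conj, hv, hubdef, map_ofNat]
        ring
      have him' : Complex.I * ((Complex.exp (2 * Complex.I * ((ψ (d+1) : ℝ) : ℂ)) *
          ((x:ℂ)^2*u + 2*Complex.I*x*y*v - (y:ℂ)^2*ub)).im : ℂ)
          = (((c:ℂ) + (s:ℂ)*Complex.I)^2 * ((x:ℂ)^2*u + 2*Complex.I*x*y*v - (y:ℂ)^2*ub)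
            - ((c:ℂ) - (s:ℂ)*Complex.I)^2 * ((x:ℂ)^2*ub + 2*Complex.I*x*y*v - (y:ℂ)^2*u))/2 := by
        rw [imC, exp_two_I_mul]
        simp only [map_mul, map_add, map_sub, map_pow, Complex.conj_I, Complex.conj_ofReal,
          Complex.conj_conj, hv, hubdef, map_ofNat]
        ring
      rw [hre', him']
      have hzpow : (((x:ℂ)+Complex.I*y)^2)^(d+1)
          = (((x:ℂ)+Complex.I*y)^2)^d * ((x:ℂ)+Complex.I*y)^2 := pow_succ _ _
      have hzpowinv : ((((x:ℂ)+Complex.I*y)^2)^(d+1))⁻¹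
          = ((((x:ℂ)+Complex.I*y)^2)^d)⁻¹ * ((x:ℂ)-Complex.I*y)^2 := by
        rw [hzpow, mul_inv, hzinv]
      refine mat2_ext ?_ rfl rfl ?_
      · rw [hzpowinv]; ring
      · rw [hzpow]; ring

lemma stab (F : ℤ → ℂ) (z : ℂ) (hfin : (Function.support F).Finite) :
    ∀ K, suppBound F ≤ K → nlftPartial F K z = nlftPartial F (suppBound F) z := by
  intro K hK
  induction K, hK using Nat.le_induction with
  | base => rfl
  | succ K hK ih =>
    have hzero : ∀ m : ℤ, suppBound F < m.natAbs → F m = 0 := by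
      intro m hm
      by_contra h
      have hmem : m ∈ hfin.toFinset := by simpa [Function.mem_support] using h
      have hle : m.natAbs ≤ hfin.toFinset.sup (fun n => n.natAbs) :=
        Finset.le_sup (f := fun n : ℤ => n.natAbs) hmem
      rw [suppBound, dif_pos hfin] at hm
      omega
    rw [peel, ih, factor_one _ _ _ (hzero _ (by omega)), factor_one _ _ _ (hzero _ (by omega)),
      one_mul, mul_one]

lemma trunc_eq (ψ : ℕ → ℝ) (d K : ℕ) (hK : K ≤ d) (z : ℂ) :
    nlftPartial (fun n : ℤ => if n.natAbs ≤ d then Complex.I * (Real.tan (ψ n.natAbs) : ℂ) else 0) K z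
      = nlftPartial (fun n : ℤ => Complex.I * (Real.tan (ψ n.natAbs) : ℂ)) K z := by
  rw [nlftPartial_eq, nlftPartial_eq]
  congr 1
  refine List.map_congr_left ?_
  intro j hj
  rw [List.mem_range] at hj
  refine factor_congr _ _ _ _ ?_
  have : ((j:ℤ) - (K:ℤ)).natAbs ≤ d := by omega
  simp only [this, if_true]

/-- Lemma `upperleft` of the paper: `i Im u_d(Ψ,x) = b(z)` where
`(a,b)` is the nonlinear Fourier series of the truncated sequence `Fₙ = i tan ψ_{|n|}`;
in particular `b(z)` is purely imaginary on the circle. -/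
theorem qsp_im_eq_b (ψ : ℕ → ℝ) (hψ : ∀ k, ψ k ∈ Set.Ioo (-(Real.pi / 2)) (Real.pi / 2))
    (d : ℕ) (hd : 1 ≤ d)
    (x : ℝ) (hx : x ∈ Set.Icc (0:ℝ) 1) (θ : ℝ) (hθ : θ ∈ Set.Icc (0:ℝ) (Real.pi / 2))
    (hcos : Real.cos θ = x) :
    Complex.I * ((uQSP ψ x d).im : ℂ) =
      nlftB (fun n : ℤ => if n.natAbs ≤ d then Complex.I * Real.tan (ψ n.natAbs) else 0)
        (Complex.exp (2 * Complex.I * θ)) ∧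
    (nlftB (fun n : ℤ => if n.natAbs ≤ d then Complex.I * Real.tan (ψ n.natAbs) else 0)
        (Complex.exp (2 * Complex.I * θ))).re = 0 := by
  have hcpos : ∀ k, 0 < Real.cos (ψ k) := fun k => Real.cos_pos_of_mem_Ioo (hψ k)
  set y := Real.sin θ with hy
  have hpi : Real.pi / 2 ≤ Real.pi := by
    have := Real.pi_pos; linarith
  have hynn : 0 ≤ y := Real.sin_nonneg_of_nonneg_of_le_pi hθ.1 (le_trans hθ.2 hpi)
  have hsq : Real.sqrt (1 - x^2) = y := by
    rw [← hcos, show (1 : ℝ) - Real.cos θ ^2 = Real.sin θ ^2 by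
      have := Real.sin_sq_add_cos_sq θ; linarith]
    exact Real.sqrt_sq hynn
  have hxy : (x:ℂ)^2 + (y:ℂ)^2 = 1 := by
    have h := Real.sin_sq_add_cos_sq θ
    rw [hcos] at h
    have h' : x^2 + y^2 = 1 := by rw [hy]; linarith
    exact_mod_cast h'
  have hz : Complex.exp (2 * Complex.I * θ) = ((x:ℂ) + Complex.I*y)^2 := by
    rw [exp_two_I_mul, ← hcos, hy]
    ring
  have hW : Wmat x = !![(x:ℂ), Complex.I*(y:ℂ); Complex.I*(y:ℂ), (x:ℂ)] := by
    unfold Wmat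
    rw [hsq]
  obtain ⟨u, v, hv, hU, hP⟩ := main_ind ψ hcpos x y hxy d
  have hU' := hU hW
  set F := (fun n : ℤ => if n.natAbs ≤ d then Complex.I * (Real.tan (ψ n.natAbs) : ℂ) else 0)
    with hF
  have hfin : (Function.support F).Finite := by
    apply Set.Finite.subset (Set.finite_Icc (-(d:ℤ)) (d:ℤ))
    intro n hn
    rw [Function.mem_support] at hn
    simp only [hF] at hn
    simp only [Set.mem_Icc]
    by_contra hc
    exact hn (if_neg (by omega))
  have hsb : suppBound F ≤ d := by
    rw [suppBound, dif_pos hfin]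
    apply Finset.sup_le
    intro n hn
    rw [Set.Finite.mem_toFinset, Function.mem_support] at hn
    simp only [hF] at hn
    by_contra hc
    exact hn (if_neg (by omega))
  have hnlft : nlft F (Complex.exp (2 * Complex.I * θ))
      = nlftPartial (fun n : ℤ => Complex.I * (Real.tan (ψ n.natAbs) : ℂ)) d
          (((x:ℂ) + Complex.I*y)^2) := by
    rw [nlft, hz, ← stab F _ hfin d hsb, trunc_eq ψ d d le_rfl]
  have hb : nlftB F (Complex.exp (2 * Complex.I * θ)) = Complex.I * ((uQSP ψ x d).im : ℂ) := by
    rw [nlftB, hnlft, hP]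
    have : uQSP ψ x d = u := by rw [uQSP, hU']; rfl
    rw [this]
    rfl
  refine ⟨hb.symm, ?_⟩
  rw [hb]
  simp

end
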